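/- Let f : (X, ∂, ξ) → (Y, ∂', ξ') be a surjective morphism of precrossed B-modules of groups. In the semidirect product X ⋊[ξ] B, let d : X ⋊[ξ] B →* B be the canonical projection (x, b) ↦ b, let c : X ⋊[ξ] B →* B be the homomorphism (x, b) ↦ ∂ x * b, and let K₁ be the image of ker f under the canonical inclusion inl : X →* X ⋊[ξ] B. Then the Peiffer commutator ⟨ker f, ⊤⟩ in X is trivial if and only if both commutator subgroups ⁅K₁, ker d⁆ and ⁅K₁, ker c⁆ are trivial in X ⋊[ξ] B. -/

import Mathlib

variable {B X Y Z : Type*} [Group B] [Group X] [Group Y] [Group Z]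

/-- `(X, δ, ξ)` is a precrossed `B`-module of groups:
`δ : X →* B` satisfies `δ (ξ b x) = b * δ x * b⁻¹`. -/
def IsPrecrossedMod (δ : X →* B) (ξ : B →* MulAut X) : Prop :=
  ∀ (b : B) (x : X), δ (ξ b x) = b * δ x * b⁻¹

/-- A subgroup invariant under the `B`-action, i.e. a precrossed submodule. -/
def IsBInvariant (ξ : B →* MulAut X) (M : Subgroup X) : Prop :=
  ∀ (b : B), ∀ m ∈ M, ξ b m ∈ M

/-- The Peiffer commutator `⟨M, N⟩` of two precrossed submodules: the subgroup
generated by the Peiffer elements `m * n * m⁻¹ * (ξ (δ m) n)⁻¹` and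
`n * m * n⁻¹ * (ξ (δ n) m)⁻¹` for `m ∈ M`, `n ∈ N`. -/
def peifferCommutator (δ : X →* B) (ξ : B →* MulAut X) (M N : Subgroup X) : Subgroup X :=
  Subgroup.closure
    ({y | ∃ m ∈ M, ∃ n ∈ N, y = m * n * m⁻¹ * (ξ (δ m) n)⁻¹} ∪
     {y | ∃ m ∈ M, ∃ n ∈ N, y = n * m * n⁻¹ * (ξ (δ n) m)⁻¹})

/-- `f` is a morphism of precrossed `B`-modules. -/
def IsPXModHom (δ : X →* B) (ξ : B →* MulAut X) (δ' : Y →* B) (ξ' : B →* MulAut Y)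
    (f : X →* Y) : Prop :=
  (∀ x : X, δ' (f x) = δ x) ∧ ∀ (b : B) (x : X), f (ξ b x) = ξ' b (f x)

/-- for a surjective morphism `f` of precrossed `B`-modules, the Peiffer
commutator `⟨ker f, ⊤⟩` is trivial iff, in the semidirect product `X ⋊[ξ] B`
(the associated reflexive graph), the image `K₁` of `ker f` under `inl` has trivial
commutator with both `ker d` and `ker c`, where `d (x, b) = b` and `c (x, b) = δ x * b`. -/
theorem peiffer_trivial_iff_commutators_trivial
    (δ : X →* B) (ξ : B →* MulAut X) (hpre : IsPrecrossedMod δ ξ)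
    (δ' : Y →* B) (ξ' : B →* MulAut Y) (hpre' : IsPrecrossedMod δ' ξ')
    (f : X →* Y) (hf : Function.Surjective f) (hfhom : IsPXModHom δ ξ δ' ξ' f)
    (c : X ⋊[ξ] B →* B) (hc : ∀ (x : X) (b : B), c ⟨x, b⟩ = δ x * b) :
    peifferCommutator δ ξ f.ker ⊤ = ⊥ ↔
      (⁅Subgroup.map (SemidirectProduct.inl : X →* X ⋊[ξ] B) f.ker,
          (SemidirectProduct.rightHom : X ⋊[ξ] B →* B).ker⁆ = ⊥ ∧
       ⁅Subgroup.map (SemidirectProduct.inl : X →* X ⋊[ξ] B) f.ker, c.ker⁆ = ⊥) := by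
  
  have hδker : ∀ m ∈ f.ker, δ m = 1 := by
    intro m hm
    rw [← hfhom.1 m, MonoidHom.mem_ker.mp hm, map_one]
  -- commutator formula in the semidirect product
  open scoped commutatorElement in
  have key : ∀ (m x : X) (b : B),
      ⁅(SemidirectProduct.inl m : X ⋊[ξ] B), (⟨x, b⟩ : X ⋊[ξ] B)⁆
        = SemidirectProduct.inl (m * x * (ξ b m)⁻¹ * x⁻¹) := by
    intro m x b
    ext
    · simp [commutatorElement_def, mul_assoc]
    · simp [commutatorElement_def]
  open scoped commutatorElement in
  have hbot : ∀ (H K : Subgroup (X ⋊[ξ] B)),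
      (⁅H, K⁆ = ⊥ ↔ ∀ g ∈ H, ∀ h ∈ K, ⁅g, h⁆ = 1) := by
    intro H K
    rw [eq_bot_iff, Subgroup.commutator_le]
    simp [Subgroup.mem_bot]
  -- characterization of the left-hand side
  have hLHS : peifferCommutator δ ξ f.ker ⊤ = ⊥ ↔
      ((∀ m ∈ f.ker, ∀ n : X, m * n * m⁻¹ * n⁻¹ = 1) ∧
       (∀ m ∈ f.ker, ∀ n : X, n * m * n⁻¹ * (ξ (δ n) m)⁻¹ = 1)) := by
    rw [peifferCommutator, Subgroup.closure_eq_bot_iff, Set.union_subset_iff]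
    constructor
    · rintro ⟨h1, h2⟩
      constructor
      · intro m hm n
        have := h1 ⟨m, hm, n, trivial, rfl⟩
        simp only [Set.mem_singleton_iff] at this
        rwa [hδker m hm, map_one, MulAut.one_apply] at this
      · intro m hm n
        exact h2 ⟨m, hm, n, trivial, rfl⟩
    · rintro ⟨h1, h2⟩
      constructor
      · rintro y ⟨m, hm, n, -, rfl⟩
        have := h1 m hm n
        simp only [Set.mem_singleton_iff]
        rw [hδker m hm, map_one, MulAut.one_apply]
        exact this
      · rintro y ⟨m, hm, n, -, rfl⟩
        exact h2 m hm n
  rw [hLHS, hbot, hbot]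
  constructor
  · rintro ⟨h1, h2⟩
    constructor
    · rintro g ⟨m, hm, rfl⟩ q hq
      obtain ⟨x, b⟩ := q
      have hb : b = 1 := hq
      subst hb
      rw [key]
      have := h1 m hm x
      simp only [map_one, MulAut.one_apply]
      rw [show m * x * m⁻¹ * x⁻¹ = 1 from this, map_one]
    · rintro g ⟨m, hm, rfl⟩ q hq
      obtain ⟨x, b⟩ := q
      have hb : δ x * b = 1 := by rw [← hc]; exact hq
      have hb' : b = (δ x)⁻¹ := eq_inv_of_mul_eq_one_right hb
      subst hb'
      rw [key]
      -- use Peiffer relation with n := x⁻¹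
      have h := h2 m hm x⁻¹
      rw [mul_inv_eq_one] at h
      -- h : x⁻¹ * m * x⁻¹⁻¹ = ξ (δ x⁻¹) m
      have hξ : ξ (δ x)⁻¹ m = x⁻¹ * m * x := by
        rw [← map_inv δ, ← h, inv_inv]
      rw [hξ]
      have : m * x * (x⁻¹ * m * x)⁻¹ * x⁻¹ = 1 := by group
      rw [this, map_one]
  · rintro ⟨h1, h2⟩
    constructor
    · intro m hm n
      have := h1 (SemidirectProduct.inl m) ⟨m, hm, rfl⟩ (⟨n, 1⟩ : X ⋊[ξ] B) rfl
      rw [key] at this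
      have := SemidirectProduct.inl_injective (by rw [this, map_one] :
        (SemidirectProduct.inl (m * n * (ξ (1 : B) m)⁻¹ * n⁻¹) : X ⋊[ξ] B)
          = SemidirectProduct.inl 1)
      rw [map_one, MulAut.one_apply] at this
      rw [mul_inv_eq_one] at this ⊢
      rw [mul_inv_eq_iff_eq_mul] at this
      rw [mul_inv_eq_iff_eq_mul]
      -- this : m * n = n * m ; goal : m * n = n * m ?
      -- goal was m * n * m⁻¹ = n ; after rw: m * n = n * m
      exact this
    · intro m hm n
      have hmem : (⟨n⁻¹, δ n⟩ : X ⋊[ξ] B) ∈ c.ker := by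
        rw [MonoidHom.mem_ker, hc, map_inv, inv_mul_cancel]
      have := h2 (SemidirectProduct.inl m) ⟨m, hm, rfl⟩ _ hmem
      rw [key] at this
      have h := SemidirectProduct.inl_injective (by rw [this, map_one] :
        (SemidirectProduct.inl (m * n⁻¹ * (ξ (δ n) m)⁻¹ * n⁻¹⁻¹) : X ⋊[ξ] B)
          = SemidirectProduct.inl 1)
      -- h : m * n⁻¹ * (ξ (δ n) m)⁻¹ * n⁻¹⁻¹ = 1
      rw [mul_inv_eq_one]
      have := h
      rw [inv_inv] at this
      -- this : m * n⁻¹ * (ξ (δ n) m)⁻¹ * n = 1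
      have e : m * n⁻¹ * (ξ (δ n) m)⁻¹ = n⁻¹ := eq_inv_of_mul_eq_one_left this
      calc n * m * n⁻¹ = n * (m * n⁻¹ * (ξ (δ n) m)⁻¹) * (ξ (δ n) m) * n⁻¹ * n := by group
        _ = ξ (δ n) m := by rw [e]; group
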